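/- Let n ≥ 1 and realize a_n in R^{n+1} with er_a = e_a − (1/(n+1))·Σ_j e_j and fundamental weights λ_i = er_1 + … + er_i. For a nonempty subset P = {k_1 < … < k_a} of {1,…,n}, the weight λ = Σ_{j=1}^{a} (−1)^{a−j} λ_{k_j} equals a sum of exactly i = Σ_{j=1}^{a} (−1)^{a−j} k_j distinct vectors from {er_1,…,er_{n+1}}; i.e. λ is a weight of the i-th fundamental representation Λ_i of a_n. -/
import Mathlib


open Finset

/-- The vector `er_a = e_a - (1/(n+1)) ∑_j e_j` in `ℝ^{n+1}` (0-based index `a`). -/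
noncomputable def er (n a : ℕ) : Fin (n + 1) → ℝ :=
  fun j => (if (j : ℕ) = a then 1 else 0) - 1 / (n + 1)

/-- The fundamental weight `λ_{i+1} = er_1 + ⋯ + er_{i+1}` (0-based index `i`). -/
noncomputable def lam (n i : ℕ) : Fin (n + 1) → ℝ :=
  ∑ a ∈ Finset.range (i + 1), er n a

/-- The alternating sum `λ = ∑_{j=1}^{a} (-1)^{a-j} λ_{k_j}` of fundamental weights
attached to a nonempty `P = {k_1 < ⋯ < k_a} ⊆ {1, …, n}`. -/
noncomputable def lamAlt (n : ℕ) (P : Finset ℕ) : Fin (n + 1) → ℝ :=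
  ∑ k ∈ P, ((-1 : ℝ) ^ (P.filter (fun x => k < x)).card) • lam n (k - 1)

/-- the weight `λ = ∑_{j=1}^{a} (-1)^{a-j} λ_{k_j}` is a sum of exactly
`i = ∑_{j=1}^{a} (-1)^{a-j} k_j` distinct vectors from `{er_1, …, er_{n+1}}`, i.e.
it is a weight of the `i`-th fundamental representation of `a_n`. -/

lemma altSum {R : Type*} [Ring R] (Q : Finset ℕ) :
    ∑ k ∈ Q, (-1 : R) ^ (Q.filter (fun x => k < x)).card
      = if Odd Q.card then 1 else 0 := by
  classical
  induction Q using Finset.strongInduction with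
  | _ Q ih =>
    rcases Q.eq_empty_or_nonempty with rfl | hQ
    · simp
    · set m := Q.min' hQ with hm'
      have hm : m ∈ Q := Q.min'_mem hQ
      rw [← Finset.add_sum_erase _ _ hm]
      have h1 : (Q.filter (fun x => m < x)) = Q.erase m := by
        ext x
        simp only [Finset.mem_filter, Finset.mem_erase]
        constructor
        · rintro ⟨hx, hlt⟩; exact ⟨hlt.ne', hx⟩
        · rintro ⟨hne, hx⟩; exact ⟨hx, lt_of_le_of_ne (Q.min'_le x hx) (Ne.symm hne)⟩
      have h2 : ∑ k ∈ Q.erase m, (-1:R)^((Q.filter (fun x => k < x)).card)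
          = ∑ k ∈ Q.erase m, (-1:R)^(((Q.erase m).filter (fun x => k < x)).card) := by
        refine Finset.sum_congr rfl fun k hk => ?_
        have hk' := Finset.mem_of_mem_erase hk
        have hmk : m < k := lt_of_le_of_ne (Q.min'_le k hk')
          (Ne.symm (Finset.ne_of_mem_erase hk))
        congr 2
        rw [Finset.filter_erase]
        refine (Finset.erase_eq_of_notMem ?_).symm
        simp only [Finset.mem_filter]
        exact fun h => absurd h.2 (by omega)
      rw [h1, h2, ih (Q.erase m) (Finset.erase_ssubset hm),
        Finset.card_erase_of_mem hm]
      have hc : 1 ≤ Q.card := Finset.card_pos.mpr hQ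
      rcases Nat.even_or_odd Q.card with he | ho
      · have h3 : Odd (Q.card - 1) := by
          rw [Nat.odd_iff]; rw [Nat.even_iff] at he; omega
        rw [Odd.neg_one_pow h3, if_pos h3, if_neg (by simpa using he)]
        exact neg_add_cancel 1
      · have h3 : Even (Q.card - 1) := by
          rw [Nat.even_iff]; rw [Nat.odd_iff] at ho; omega
        rw [Even.neg_one_pow h3, if_neg (by simpa using h3), if_pos ho]
        exact add_zero 1

theorem lamAlt_is_fundamental_weight (n : ℕ) (hn : 1 ≤ n) (P : Finset ℕ)
    (hP : P ⊆ Finset.Icc 1 n) (hne : P.Nonempty) :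
    ∃ S : Finset ℕ, S ⊆ Finset.range (n + 1) ∧
      (S.card : ℤ) = ∑ k ∈ P, (-1 : ℤ) ^ (P.filter (fun x => k < x)).card * (k : ℤ) ∧
      lamAlt n P = ∑ b ∈ S, er n b := by
  classical
  refine ⟨(Finset.range (n+1)).filter (fun b => Odd ((P.filter (fun k => b < k)).card)),
    Finset.filter_subset _ _, ?_, ?_⟩
  · -- cardinality
    have hrange : ∀ k ∈ P, (Finset.range (n+1)).filter (fun b => b < k) = Finset.range k := by
      intro k hk
      have hk' : 1 ≤ k ∧ k ≤ n := by simpa using hP hk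
      ext x; simp only [Finset.mem_filter, Finset.mem_range]; omega
    have key : ∀ b, (if Odd ((P.filter (fun k => b < k)).card) then (1:ℤ) else 0)
        = ∑ k ∈ P.filter (fun k => b < k), (-1:ℤ)^((P.filter (fun x => k < x)).card) := by
      intro b
      rw [← altSum (P.filter (fun k => b < k))]
      refine Finset.sum_congr rfl fun k hk => ?_
      simp only [Finset.mem_filter] at hk
      congr 2
      rw [Finset.filter_filter]
      refine Finset.filter_congr fun x _ => ?_
      constructor
      · exact fun h => h.2
      · exact fun h => ⟨by omega, h⟩
    rw [Finset.card_filter]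
    push_cast
    calc (∑ b ∈ Finset.range (n+1),
            if Odd ((P.filter (fun k => b < k)).card) then (1:ℤ) else 0)
        = ∑ b ∈ Finset.range (n+1), ∑ k ∈ P.filter (fun k => b < k),
            (-1:ℤ)^((P.filter (fun x => k < x)).card) := by
          exact Finset.sum_congr rfl fun b _ => key b
      _ = ∑ b ∈ Finset.range (n+1), ∑ k ∈ P,
            if b < k then (-1:ℤ)^((P.filter (fun x => k < x)).card) else 0 := by
          refine Finset.sum_congr rfl fun b _ => ?_
          rw [Finset.sum_filter]
      _ = ∑ k ∈ P, ∑ b ∈ Finset.range (n+1),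
            if b < k then (-1:ℤ)^((P.filter (fun x => k < x)).card) else 0 :=
          Finset.sum_comm
      _ = ∑ k ∈ P, (-1:ℤ)^((P.filter (fun x => k < x)).card) * (k:ℤ) := by
          refine Finset.sum_congr rfl fun k hk => ?_
          rw [← Finset.sum_filter, hrange k hk, Finset.sum_const, Finset.card_range,
            nsmul_eq_mul, mul_comm]
  · -- vector identity
    have hrange : ∀ k ∈ P, (Finset.range (n+1)).filter (fun b => b < k) = Finset.range k := by
      intro k hk
      have hk' : 1 ≤ k ∧ k ≤ n := by simpa using hP hk
      ext x; simp only [Finset.mem_filter, Finset.mem_range]; omega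
    have key : ∀ b, (if Odd ((P.filter (fun k => b < k)).card) then (1:ℝ) else 0)
        = ∑ k ∈ P.filter (fun k => b < k), (-1:ℝ)^((P.filter (fun x => k < x)).card) := by
      intro b
      rw [← altSum (P.filter (fun k => b < k))]
      refine Finset.sum_congr rfl fun k hk => ?_
      simp only [Finset.mem_filter] at hk
      congr 2
      rw [Finset.filter_filter]
      refine Finset.filter_congr fun x _ => ?_
      constructor
      · exact fun h => h.2
      · exact fun h => ⟨by omega, h⟩
    rw [lamAlt, Finset.sum_filter]
    calc (∑ k ∈ P, ((-1 : ℝ) ^ (P.filter (fun x => k < x)).card) • lam n (k - 1))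
        = ∑ k ∈ P, ∑ b ∈ Finset.range (n+1),
            (if b < k then ((-1 : ℝ) ^ (P.filter (fun x => k < x)).card) • er n b else 0) := by
          refine Finset.sum_congr rfl fun k hk => ?_
          have hk' : 1 ≤ k ∧ k ≤ n := by simpa using hP hk
          rw [lam]
          have h1 : k - 1 + 1 = k := by omega
          rw [h1, Finset.smul_sum, ← hrange k hk, Finset.sum_filter]
      _ = ∑ b ∈ Finset.range (n+1), ∑ k ∈ P,
            (if b < k then ((-1 : ℝ) ^ (P.filter (fun x => k < x)).card) else 0) • er n b := by
          rw [Finset.sum_comm]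
          refine Finset.sum_congr rfl fun b _ => Finset.sum_congr rfl fun k _ => ?_
          split <;> simp
      _ = ∑ b ∈ Finset.range (n+1),
            (if Odd ((P.filter (fun k => b < k)).card) then er n b else 0) := by
          refine Finset.sum_congr rfl fun b _ => ?_
          rw [← Finset.sum_smul, ← Finset.sum_filter, ← key b]
          split <;> simp
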